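/- Let T ≥ 1, let 𝒳_0, …, 𝒳_T be nonempty finite sets, for each t ∈ {1,…,T} let P_t : 𝒳_t × 𝒳_{t−1} → ℝ be a Markov kernel, let p_T be a probability distribution on 𝒳_T, and define p_{t−1}(y) = Σ_{x∈𝒳_t} p_t(x)·P_t(x,y) for t = T,…,1. Let α > 0 and r : 𝒳_0 → ℝ, and define value functions v_0(x) = exp(r(x)/α) and v_t(x) = Σ_{y∈𝒳_{t−1}} P_t(x,y)·v_{t−1}(y) for t = 1,…,T (so v_t(x) > 0 for all t, x). Define the optimal kernels P*_t(x,y) = P_t(x,y)·v_{t−1}(y)/v_t(x) and set Z_t = Σ_{x∈𝒳_t} p_t(x)·v_t(x). Then Z_t = Z_0 for all t ∈ {0,…,T}, and the time-0 marginal of the chain started from p*_T(x) = p_T(x)·v_T(x)/Z_T and evolved by P*_T, …, P*_1 — namely μ_0(x_0) = Σ_{x_T,…,x_1} p*_T(x_T)·∏_{t=1}^{T} P*_t(x_t, x_{t−1}) — equals p*_0(x_0) = p_0(x_0)·exp(r(x_0)/α)/Z_0. -/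

import Mathlib

universe u

lemma path_marginal : ∀ (n : ℕ) (X : ℕ → Type u) (_ : ∀ t, Fintype (X t))
    (Q : ∀ t : ℕ, X (t+1) → X t → ℝ) (m : ∀ t : ℕ, X t → ℝ)
    (_hm : ∀ t, t < n → ∀ y, m t y = ∑ x, m (t+1) x * Q t x y)
    (w : X 0 → ℝ),
    ∑ g : (t : Fin (n+1)) → X (t : ℕ), w (g 0) * (m n (g (Fin.last n)) *
        ∏ t : Fin n, Q t (g t.succ) (g t.castSucc))
    = ∑ x, w x * m 0 x := by
  intro n
  induction n with
  | zero =>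
    intro X instX Q m hm w
    rw [← (Equiv.piUnique (fun t : Fin 1 => X (t : ℕ))).symm.sum_comp]
    simp [Equiv.piUnique, uniqueElim, Fin.last]
  | succ n ih =>
    intro X instX Q m hm w
    rw [← (Fin.consEquiv (fun t : Fin (n+2) => X (t : ℕ))).sum_comp]
    rw [Fintype.sum_prod_type]
    have key : ∀ (x : X 0) (h : (i : Fin (n+1)) → X (i : ℕ).succ),
        w ((Fin.consEquiv (fun t : Fin (n+2) => X (t : ℕ))) (x, h) 0) *
          (m (n+1) ((Fin.consEquiv (fun t : Fin (n+2) => X (t : ℕ))) (x, h) (Fin.last (n+1))) *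
            ∏ t : Fin (n+1), Q t ((Fin.consEquiv (fun t : Fin (n+2) => X (t : ℕ))) (x, h) t.succ)
              ((Fin.consEquiv (fun t : Fin (n+2) => X (t : ℕ))) (x, h) t.castSucc))
        = (w x * Q 0 (h 0) x) * (m (n+1) (h (Fin.last n)) *
            ∏ t : Fin n, Q (t+1) (h t.succ) (h t.castSucc)) := by
      intro x h
      simp only [Fin.consEquiv_apply, Fin.cons_zero, ← Fin.succ_last, Fin.cons_succ,
        Fin.prod_univ_succ, Fin.castSucc_zero, Fin.succ_zero_eq_one, ← Fin.succ_castSucc]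
      simp only [Fin.val_succ, Fin.val_zero]
      change w x * (m (n+1) (h (Fin.last n)) * (Q 0 (h 0) x *
        ∏ x_1 : Fin n, Q ((x_1 : ℕ) + 1) (h x_1.succ) (h x_1.castSucc))) = _
      ring
    refine (Finset.sum_congr rfl fun x _ => Finset.sum_congr rfl fun h _ => key x h).trans ?_
    change ∑ x : X 0, ∑ h : (i : Fin (n+1)) → X (i : ℕ).succ, w x * Q 0 (h 0) x *
      (m (n+1) (h (Fin.last n)) * ∏ t : Fin n, Q (t+1) (h t.succ) (h t.castSucc)) =
      ∑ x, w x * m 0 x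
    rw [Finset.sum_comm]
    have step : ∀ h : (i : Fin (n+1)) → X (i : ℕ).succ,
        ∑ x : X 0, (w x * Q 0 (h 0) x) * (m (n+1) (h (Fin.last n)) *
            ∏ t : Fin n, Q (t+1) (h t.succ) (h t.castSucc))
        = (∑ x : X 0, w x * Q 0 (h 0) x) * (m (n+1) (h (Fin.last n)) *
            ∏ t : Fin n, Q (t+1) (h t.succ) (h t.castSucc)) := by
      intro h; rw [Finset.sum_mul]
    trans (∑ z : X (0+1), (∑ x : X 0, w x * Q 0 z x) * m (0+1) z)
    · rw [← ih (fun t => X (t+1)) (fun t => instX (t+1)) (fun t => Q (t+1)) (fun t => m (t+1))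
        (fun t ht y => hm (t+1) (by omega) y) (fun z => ∑ x : X 0, w x * Q 0 z x)]
      refine Finset.sum_congr rfl fun h _ => ?_
      rw [Finset.sum_mul]
    · simp only [Finset.sum_mul]
      rw [Finset.sum_comm]
      refine Finset.sum_congr rfl fun x _ => ?_
      rw [hm 0 (by omega) x, Finset.mul_sum]
      refine Finset.sum_congr rfl fun z _ => ?_
      ring


/-- For a backward chain of Markov kernels `P t : X (t+1) → X t → ℝ`
(`t = 0,…,T-1`, representing the kernels `P_{t+1}` of the paper), marginals `p t`
obtained from a distribution `p T` by pushing through the kernels, value functions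
`v 0 = exp(r/α)`, `v (t+1) x = Σ_y P t x y · v t y`, and the optimal kernels
`P*_t(x,y) = P t x y · v t y / v (t+1) x`:  the normalizing constants
`Z t = Σ_x p t x · v t x` agree for all `t ≤ T`, and the time-0 marginal of the chain
started from `p*_T(x) = p T x · v T x / Z T` and evolved by the optimal kernels equals
`p*_0(x₀) = p 0 x₀ · exp(r x₀ / α) / Z 0`. -/
theorem optimal_kernel_time_zero_marginal
    (T : ℕ) (hT : 1 ≤ T) (X : ℕ → Type*) [∀ t, Fintype (X t)] [∀ t, Nonempty (X t)]
    [DecidableEq (X 0)]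
    (P : ∀ t, X (t + 1) → X t → ℝ)
    (hP_nonneg : ∀ t, t < T → ∀ x y, 0 ≤ P t x y)
    (hP_sum : ∀ t, t < T → ∀ x, ∑ y, P t x y = 1)
    (p : ∀ t, X t → ℝ)
    (hpT_nonneg : ∀ x, 0 ≤ p T x) (hpT_sum : ∑ x, p T x = 1)
    (hp_rec : ∀ t, t < T → ∀ y, p t y = ∑ x, p (t + 1) x * P t x y)
    (α : ℝ) (hα : 0 < α) (r : X 0 → ℝ)
    (v : ∀ t, X t → ℝ)
    (hv0 : ∀ x, v 0 x = Real.exp (r x / α))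
    (hv_rec : ∀ t, t < T → ∀ x, v (t + 1) x = ∑ y, P t x y * v t y) :
    (∀ t ≤ T, ∑ x, p t x * v t x = ∑ x, p 0 x * v 0 x)
    ∧ ∀ x0 : X 0,
        (∑ g ∈ Finset.univ.filter
            (fun g : (t : Fin (T + 1)) → X t => g ⟨0, Nat.succ_pos T⟩ = x0),
          p T (g (Fin.last T)) * v T (g (Fin.last T)) / (∑ x, p T x * v T x) *
            ∏ t : Fin T,
              P t (g t.succ) (g t.castSucc) * v t (g t.castSucc) / v (t + 1) (g t.succ))
        = p 0 x0 * Real.exp (r x0 / α) / (∑ x, p 0 x * v 0 x) := by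
  have hvpos : ∀ t, t ≤ T → ∀ x, 0 < v t x := by
    intro t
    induction t with
    | zero => intro _ x; rw [hv0]; exact Real.exp_pos _
    | succ t ih =>
      intro ht x
      rw [hv_rec t (by omega)]
      obtain ⟨y, hy⟩ : ∃ y, P t x y ≠ 0 := by
        by_contra hc
        push_neg at hc
        have h1 := hP_sum t (by omega) x
        simp only [hc] at h1
        simp at h1
      refine Finset.sum_pos' (fun y _ => mul_nonneg (hP_nonneg t (by omega) x y)
        (le_of_lt (ih (by omega) y))) ?_
      exact ⟨y, Finset.mem_univ y,
        mul_pos ((hP_nonneg t (by omega) x y).lt_of_ne (Ne.symm hy)) (ih (by omega) y)⟩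
  have hZ : ∀ t ≤ T, ∑ x, p t x * v t x = ∑ x, p 0 x * v 0 x := by
    intro t
    induction t with
    | zero => intro _; rfl
    | succ t ih =>
      intro ht
      rw [← ih (by omega)]
      calc ∑ x, p (t+1) x * v (t+1) x
          = ∑ x, ∑ y, p (t+1) x * P t x y * v t y := by
            refine Finset.sum_congr rfl fun x _ => ?_
            rw [hv_rec t (by omega), Finset.mul_sum]
            exact Finset.sum_congr rfl fun y _ => by ring
        _ = ∑ y, (∑ x, p (t+1) x * P t x y) * v t y := by
            rw [Finset.sum_comm]
            exact Finset.sum_congr rfl fun y _ => (Finset.sum_mul _ _ _).symm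
        _ = ∑ y, p t y * v t y := by
            refine Finset.sum_congr rfl fun y _ => ?_
            rw [← hp_rec t (by omega)]
  refine ⟨hZ, fun x0 => ?_⟩
  set Z := ∑ x, p 0 x * v 0 x with hZdef
  have hm : ∀ t, t < T → ∀ y : X t,
      p t y * v t y / Z = ∑ x, (p (t+1) x * v (t+1) x / Z) *
        (P t x y * v t y / v (t+1) x) := by
    intro t ht y
    have h1 : ∀ x : X (t+1), (p (t+1) x * v (t+1) x / Z) * (P t x y * v t y / v (t+1) x)
        = p (t+1) x * P t x y * (v t y / Z) := by
      intro x
      have hne := (hvpos (t+1) (by omega) x).ne'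
      field_simp
    rw [Finset.sum_congr rfl fun x _ => h1 x, ← Finset.sum_mul, ← hp_rec t ht y,
      mul_div_assoc]
  have main := path_marginal T X (fun t => inferInstance)
      (fun t x y => P t x y * v t y / v (t+1) x)
      (fun t x => p t x * v t x / Z)
      (fun t ht y => hm t ht y)
      (fun x => if x = x0 then 1 else 0)
  rw [Finset.sum_filter, hZ T le_rfl, ← hv0 x0]
  calc (∑ g : (t : Fin (T + 1)) → X (t : ℕ), if g ⟨0, Nat.succ_pos T⟩ = x0 then
          p T (g (Fin.last T)) * v T (g (Fin.last T)) / Z *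
            ∏ t : Fin T,
              P t (g t.succ) (g t.castSucc) * v t (g t.castSucc) / v (t + 1) (g t.succ)
        else 0)
      = ∑ g : (t : Fin (T + 1)) → X (t : ℕ), (@ite ℝ (g 0 = x0) ((inferInstance : DecidableEq (X 0)) (g 0) x0) 1 0) *
          (p T (g (Fin.last T)) * v T (g (Fin.last T)) / Z *
            ∏ t : Fin T,
              P t (g t.succ) (g t.castSucc) * v t (g t.castSucc) / v (t + 1) (g t.succ)) := by
        refine Finset.sum_congr rfl fun g _ => ?_
        by_cases hg : g 0 = x0 <;> simp [hg]
        all_goals congr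
    _ = ∑ x, (if x = x0 then 1 else 0) * (p 0 x * v 0 x / Z) := main
    _ = p 0 x0 * v 0 x0 / Z := by
        simp [ite_mul, Finset.sum_ite_eq']
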